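/- arXiv:2501.01127 — 2 statements merged into one kernel-verified Lean document; each statement's English description precedes it below -/
import Mathlib

section
/- Let α₀, β₀ > 0, d > −α₀, c > −β₀, and define the functional Φ(q) = ∫ (cγ − d·log γ) dq(γ) + KL(q ‖ Gamma(α₀, β₀)) over probability measures q on (0, ∞) with q ≪ Gamma(α₀, β₀), finite KL(q‖Gamma(α₀,β₀)), and γ ↦ cγ − d·log γ q-integrable. Then Φ is uniquely minimized at q* = Gamma(α₀ + d, β₀ + c), and the minimum value is −log[(Γ(α₀+d)/Γ(α₀)) · β₀^{α₀}/(β₀+c)^{α₀+d}]. -/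
open MeasureTheory ProbabilityTheory
open scoped ENNReal NNReal

/- Kullback–Leibler divergence `KL(q‖p)`, valued in `[0,∞]`:
`∫ log (dq/dp) dq` if `q ≪ p` and the log-density is `q`-integrable, and `+∞` otherwise. -/
open Classical in
noncomputable def klDiv {Ω : Type*} [MeasurableSpace Ω] (q p : Measure Ω) : ℝ≥0∞ :=
  if q ≪ p ∧ Integrable (llr q p) q then ENNReal.ofReal (∫ x, llr q p x ∂q) else ⊤

lemma aux_mul_log {x : ℝ} (hx : 0 ≤ x) :
    x - 1 ≤ x * Real.log x ∧ (x * Real.log x = x - 1 ↔ x = 1) := by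
  rcases eq_or_lt_of_le hx with h | h
  · simp [← h]
  · have key : ∀ y : ℝ, 0 < y → y ≠ 1 → y - 1 < y * Real.log y := by
      intro y hy hy1
      have h1 : Real.log y⁻¹ < y⁻¹ - 1 :=
        Real.log_lt_sub_one_of_pos (inv_pos.2 hy) (fun h => hy1 (inv_eq_one.mp h))
      rw [Real.log_inv] at h1
      have h2 : 1 - y⁻¹ < Real.log y := by linarith
      have h3 : y * (1 - y⁻¹) < y * Real.log y := (mul_lt_mul_iff_right₀ hy).2 h2
      have h4 : y * (1 - y⁻¹) = y - 1 := by field_simp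
      linarith
    by_cases hx1 : x = 1
    · subst hx1; simp
    · have := key x h hx1
      exact ⟨this.le, ⟨fun he => absurd he this.ne', fun he => absurd he hx1⟩⟩

lemma gibbs {Ω : Type*} [MeasurableSpace Ω] (μ ν : Measure Ω)
    [IsProbabilityMeasure μ] [IsProbabilityMeasure ν] (hμν : μ ≪ ν)
    (hint : Integrable (llr μ ν) μ) :
    0 ≤ ∫ x, llr μ ν x ∂μ ∧ (∫ x, llr μ ν x ∂μ = 0 ↔ μ = ν) := by
  set f : Ω → ℝ := fun x => (μ.rnDeriv ν x).toReal with hf_def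
  have hf_int : Integrable f ν := Measure.integrable_toReal_rnDeriv
  have hf_eq : ∫ x, f x ∂ν = 1 := by
    rw [Measure.integral_toReal_rnDeriv hμν]; simp
  have h_chg : ∫ x, llr μ ν x ∂μ = ∫ x, f x * llr μ ν x ∂ν := by
    rw [← integral_rnDeriv_smul hμν]
    simp [hf_def, smul_eq_mul]
  have h_int2 : Integrable (fun x => f x * llr μ ν x) ν := by
    have := (integrable_rnDeriv_smul_iff hμν (f := llr μ ν)).2 hint
    simpa [hf_def, smul_eq_mul] using this
  have h_ptwise : ∀ x, f x - 1 ≤ f x * llr μ ν x := by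
    intro x
    have : llr μ ν x = Real.log (f x) := rfl
    rw [this]
    exact (aux_mul_log ENNReal.toReal_nonneg).1
  have h_sub_int : Integrable (fun x => f x - 1) ν := hf_int.sub (integrable_const 1)
  have h_sub : ∫ x, (f x - 1) ∂ν = 0 := by
    rw [integral_sub hf_int (integrable_const 1), hf_eq]
    simp
  have h_ge : 0 ≤ ∫ x, llr μ ν x ∂μ := by
    rw [h_chg, ← h_sub]
    exact integral_mono h_sub_int h_int2 h_ptwise
  refine ⟨h_ge, ?_, ?_⟩
  · intro h0
    have h_diff : ∫ x, (f x * llr μ ν x - (f x - 1)) ∂ν = 0 := by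
      rw [integral_sub h_int2 h_sub_int, h_sub, ← h_chg, h0]
      ring
    have h_ae : (fun x => f x * llr μ ν x - (f x - 1)) =ᵐ[ν] 0 :=
      (integral_eq_zero_iff_of_nonneg_ae
        (Filter.Eventually.of_forall fun x => sub_nonneg.2 (h_ptwise x))
        (h_int2.sub h_sub_int)).1 h_diff
    have h_one : f =ᵐ[ν] fun _ => 1 := by
      filter_upwards [h_ae] with x hx
      have hx' : f x * Real.log (f x) = f x - 1 := by
        have : llr μ ν x = Real.log (f x) := rfl
        simpa [this, sub_eq_zero] using hx
      exact (aux_mul_log (x := f x) ENNReal.toReal_nonneg).2.1 hx'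
    have h_rn : μ.rnDeriv ν =ᵐ[ν] fun _ => (1 : ℝ≥0∞) := by
      filter_upwards [h_one, Measure.rnDeriv_lt_top μ ν] with x hx hlt
      have : (μ.rnDeriv ν x).toReal = 1 := hx
      rwa [ENNReal.toReal_eq_one_iff] at this
    calc μ = ν.withDensity (μ.rnDeriv ν) := (Measure.withDensity_rnDeriv_eq _ _ hμν).symm
    _ = ν.withDensity (fun _ => (1 : ℝ≥0∞)) := withDensity_congr_ae h_rn
    _ = ν := by simp [withDensity_one]
  · rintro rfl
    have : llr μ μ =ᵐ[μ] 0 := by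
      filter_upwards [Measure.rnDeriv_self μ] with x hx
      simp [llr, hx]
    rw [integral_congr_ae this]
    simp

lemma gamma_withDensity (α₀ β₀ d c : ℝ) (hα : 0 < α₀) (hβ : 0 < β₀)
    (hd : -α₀ < d) (hc : -β₀ < c) :
    gammaMeasure (α₀ + d) (β₀ + c) =
      (gammaMeasure α₀ β₀).withDensity
        (fun x => ENNReal.ofReal ((β₀ + c) ^ (α₀ + d) * Real.Gamma α₀ /
          (β₀ ^ α₀ * Real.Gamma (α₀ + d)) * x ^ d * Real.exp (-(c * x)))) := by
  have hα' : 0 < α₀ + d := by linarith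
  have hβ' : 0 < β₀ + c := by linarith
  set k : ℝ := (β₀ + c) ^ (α₀ + d) * Real.Gamma α₀ / (β₀ ^ α₀ * Real.Gamma (α₀ + d)) with hk
  have hk_pos : 0 < k :=
    div_pos (mul_pos (Real.rpow_pos_of_pos hβ' _) (Real.Gamma_pos_of_pos hα))
      (mul_pos (Real.rpow_pos_of_pos hβ _) (Real.Gamma_pos_of_pos hα'))
  set ρ : ℝ → ℝ≥0∞ := fun x => ENNReal.ofReal (k * x ^ d * Real.exp (-(c * x))) with hρ
  have hρ_meas : Measurable ρ := by
    apply Measurable.ennreal_ofReal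
    fun_prop
  have hae : gammaPDF (α₀ + d) (β₀ + c) =ᵐ[volume] gammaPDF α₀ β₀ * ρ := by
    have h0 : ∀ᵐ x : ℝ, x ≠ 0 := by
      rw [ae_iff]
      simpa using measure_singleton (0 : ℝ)
    filter_upwards [h0] with x hx
    rcases hx.lt_or_gt with hneg | hpos
    · simp [Pi.mul_apply, gammaPDF_of_neg hneg]
    · rw [Pi.mul_apply, gammaPDF_of_nonneg hpos.le, gammaPDF_of_nonneg hpos.le, hρ,
        ← ENNReal.ofReal_mul (by positivity)]
      congr 1
      have hxd : x ^ (α₀ + d - 1) = x ^ (α₀ - 1) * x ^ d := by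
        rw [← Real.rpow_add hpos]; ring_nf
      have hexp : Real.exp (-((β₀ + c) * x)) = Real.exp (-(β₀ * x)) * Real.exp (-(c * x)) := by
        rw [← Real.exp_add]; ring_nf
      have hcoef : (β₀ + c) ^ (α₀ + d) / Real.Gamma (α₀ + d) = β₀ ^ α₀ / Real.Gamma α₀ * k := by
        rw [hk]
        field_simp
      rw [hxd, hexp, hcoef]
      ring
  rw [gammaMeasure, gammaMeasure, withDensity_congr_ae hae]
  exact withDensity_mul _ ((measurable_gammaPDFReal α₀ β₀).ennreal_ofReal) hρ_meas

/-- Closed-form solution of the generic Gamma coordinate update (sub-problem 1): for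
`α₀, β₀ > 0`, `d > −α₀`, `c > −β₀`, the functional
`Φ(q) = ∫ (cγ − d·log γ) dq(γ) + KL(q‖Gamma(α₀,β₀))`, over probability measures
`q ≪ Gamma(α₀,β₀)` with finite KL and integrable linear term, is uniquely minimized at
`q* = Gamma(α₀+d, β₀+c)`, with minimum value
`−log[(Γ(α₀+d)/Γ(α₀)) · β₀^{α₀}/(β₀+c)^{α₀+d}]`. -/
theorem gamma_update_argmin (α₀ β₀ d c : ℝ) (hα : 0 < α₀) (hβ : 0 < β₀)
    (hd : -α₀ < d) (hc : -β₀ < c)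
    (q : Measure ℝ) [IsProbabilityMeasure q] (hac : q ≪ gammaMeasure α₀ β₀)
    (hkl : klDiv q (gammaMeasure α₀ β₀) ≠ ⊤)
    (hint : Integrable (fun γ => c * γ - d * Real.log γ) q) :
    -Real.log ((Real.Gamma (α₀ + d) / Real.Gamma α₀) * β₀ ^ α₀ / (β₀ + c) ^ (α₀ + d)) ≤
        (∫ γ, (c * γ - d * Real.log γ) ∂q) + (klDiv q (gammaMeasure α₀ β₀)).toReal ∧
      ((∫ γ, (c * γ - d * Real.log γ) ∂q) + (klDiv q (gammaMeasure α₀ β₀)).toReal =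
          -Real.log ((Real.Gamma (α₀ + d) / Real.Gamma α₀) * β₀ ^ α₀ / (β₀ + c) ^ (α₀ + d)) ↔
        q = gammaMeasure (α₀ + d) (β₀ + c)) := by
  have hα' : 0 < α₀ + d := by linarith
  have hβ' : 0 < β₀ + c := by linarith
  set p := gammaMeasure α₀ β₀ with hp
  set p' := gammaMeasure (α₀ + d) (β₀ + c) with hp'
  haveI : IsProbabilityMeasure p := isProbabilityMeasure_gammaMeasure hα hβ
  haveI : IsProbabilityMeasure p' := isProbabilityMeasure_gammaMeasure hα' hβ'
  set k : ℝ := (β₀ + c) ^ (α₀ + d) * Real.Gamma α₀ / (β₀ ^ α₀ * Real.Gamma (α₀ + d)) with hk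
  have hΓα : 0 < Real.Gamma α₀ := Real.Gamma_pos_of_pos hα
  have hΓα' : 0 < Real.Gamma (α₀ + d) := Real.Gamma_pos_of_pos hα'
  have hk_pos : 0 < k :=
    div_pos (mul_pos (Real.rpow_pos_of_pos hβ' _) hΓα)
      (mul_pos (Real.rpow_pos_of_pos hβ _) hΓα')
  set ρ : ℝ → ℝ≥0∞ := fun x => ENNReal.ofReal (k * x ^ d * Real.exp (-(c * x))) with hρ
  have hρ_meas : Measurable ρ := by
    apply Measurable.ennreal_ofReal; fun_prop
  have hBd : p' = p.withDensity ρ := gamma_withDensity α₀ β₀ d c hα hβ hd hc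
  -- integrability of the log-likelihood ratio w.r.t. p
  have hillr : Integrable (llr q p) q := by
    by_contra h
    exact hkl (by rw [klDiv, if_neg (by tauto)])
  have hG0 := gibbs q p hac hillr
  have hkl_eq : (klDiv q p).toReal = ∫ x, llr q p x ∂q := by
    rw [klDiv, if_pos ⟨hac, hillr⟩, ENNReal.toReal_ofReal hG0.1]
  -- a.e. positivity
  have hp_pos : ∀ᵐ x ∂p, 0 < x := by
    rw [ae_iff]
    have hset : {x : ℝ | ¬ 0 < x} = Set.Iic 0 := by ext x; simp
    rw [hset, hp, gammaMeasure, withDensity_apply _ measurableSet_Iic,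
      setLIntegral_congr (Iio_ae_eq_Iic (a := (0:ℝ))).symm,
      lintegral_gammaPDF_of_nonpos le_rfl]
  have hq_pos : ∀ᵐ x ∂q, 0 < x := hac.ae_le hp_pos
  have hρ_ne : ∀ᵐ x ∂p, ρ x ≠ 0 := by
    filter_upwards [hp_pos] with x hx
    have : 0 < k * x ^ d * Real.exp (-(c * x)) := by
      have := Real.rpow_pos_of_pos hx d
      positivity
    simp [hρ, ENNReal.ofReal_eq_zero, not_le, this]
  have hac' : p ≪ p' := by
    rw [hBd]; exact withDensity_absolutelyContinuous' hρ_meas.aemeasurable hρ_ne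
  have hac'' : p' ≪ p := by
    rw [hBd]; exact withDensity_absolutelyContinuous p ρ
  have hqp' : q ≪ p' := hac.trans hac'
  -- Radon-Nikodym computations
  have h1 : p'.rnDeriv p =ᵐ[p] ρ := by
    rw [hBd]; exact Measure.rnDeriv_withDensity p hρ_meas
  have h2 : (p'.rnDeriv p)⁻¹ =ᵐ[p] p.rnDeriv p' := Measure.inv_rnDeriv' hac'
  have h3 : q.rnDeriv p * p.rnDeriv p' =ᵐ[p] q.rnDeriv p' := Measure.rnDeriv_mul_rnDeriv' hac'
  have key : ∀ᵐ x ∂q, llr q p' x = llr q p x - (Real.log k + d * Real.log x - c * x) := by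
    filter_upwards [hq_pos, hac.ae_le h1, hac.ae_le h2, hac.ae_le h3,
      Measure.rnDeriv_pos hac, hac.ae_le (Measure.rnDeriv_lt_top q p)]
      with x hx h1x h2x h3x hposx hfinx
    set r : ℝ := k * x ^ d * Real.exp (-(c * x)) with hr
    have hr_pos : 0 < r := by
      have := Real.rpow_pos_of_pos hx d
      positivity
    have hrn' : q.rnDeriv p' x = q.rnDeriv p x * (ρ x)⁻¹ := by
      rw [← h3x, Pi.mul_apply, ← h2x, Pi.inv_apply, h1x]
    have htR : ((ρ x)⁻¹).toReal = r⁻¹ := by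
      rw [ENNReal.toReal_inv, hρ, ENNReal.toReal_ofReal hr_pos.le]
    have hlogr : Real.log r = Real.log k + d * Real.log x - c * x := by
      rw [hr, Real.log_mul (by positivity) (Real.exp_ne_zero _),
        Real.log_mul hk_pos.ne' (Real.rpow_pos_of_pos hx d).ne',
        Real.log_rpow hx, Real.log_exp]
      ring
    have hqp_ne : (q.rnDeriv p x).toReal ≠ 0 := (ENNReal.toReal_pos hposx.ne' hfinx.ne).ne'
    calc llr q p' x = Real.log ((q.rnDeriv p' x).toReal) := rfl
      _ = Real.log ((q.rnDeriv p x).toReal * ((ρ x)⁻¹).toReal) := by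
          rw [hrn', ENNReal.toReal_mul]
      _ = Real.log ((q.rnDeriv p x).toReal) + Real.log (((ρ x)⁻¹).toReal) := by
          rw [Real.log_mul hqp_ne (by rw [htR]; exact (inv_pos.2 hr_pos).ne')]
      _ = llr q p x - (Real.log k + d * Real.log x - c * x) := by
          rw [htR, Real.log_inv, hlogr]
          simp only [llr_def]
          ring
  -- integrability and integral of llr q p'
  have hint' : Integrable (llr q p') q := by
    refine ((hillr.add hint).sub (integrable_const (Real.log k))).congr ?_
    filter_upwards [key] with x hx
    simp only [Pi.add_apply, Pi.sub_apply]
    rw [hx]; ring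
  have hsum : (∫ γ, (c * γ - d * Real.log γ) ∂q) + ∫ x, llr q p x ∂q
      = (∫ x, llr q p' x ∂q) + Real.log k := by
    have h₁ : ∫ x, llr q p' x ∂q
        = ∫ x, (llr q p x + (c * x - d * Real.log x) - Real.log k) ∂q := by
      refine integral_congr_ae ?_
      filter_upwards [key] with x hx
      rw [hx]; ring
    have hIa : Integrable (fun x => llr q p x + (c * x - d * Real.log x)) q := hillr.add hint
    rw [h₁, integral_sub hIa (integrable_const _), integral_add hillr hint, integral_const]
    simp
    ring
  have hG := gibbs q p' hqp' hint'
  -- the constant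
  have hC : -Real.log ((Real.Gamma (α₀ + d) / Real.Gamma α₀) * β₀ ^ α₀ / (β₀ + c) ^ (α₀ + d))
      = Real.log k := by
    rw [← Real.log_inv]
    congr 1
    rw [hk]
    have h1 : (β₀:ℝ) ^ α₀ ≠ 0 := (Real.rpow_pos_of_pos hβ _).ne'
    have h2 : (β₀ + c) ^ (α₀ + d) ≠ 0 := (Real.rpow_pos_of_pos hβ' _).ne'
    field_simp
  rw [hkl_eq, hC]
  constructor
  · linarith [hG.1, hsum]
  · rw [show (∫ γ, (c * γ - d * Real.log γ) ∂q) + ∫ x, llr q p x ∂q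
        = (∫ x, llr q p' x ∂q) + Real.log k from hsum, add_eq_right]
    exact hG.2
end

section
/- Fix μ ∈ ℝ, σ > 0, and α₀, β₀ > 0. Consider the functional Φ(q) = ∫_{(0,∞)} KL(N(μ, σ²) ‖ N(0, ω^{-1})) dq(ω) + KL(q ‖ Gamma(α₀, β₀)) over probability measures q on (0,∞) with q ≪ Gamma(α₀, β₀), finite KL(q‖Gamma(α₀,β₀)), and ω-integrand q-integrable. Then Φ is uniquely minimized at q* = Gamma( α₀ + 1/2 , β₀ + (μ² + σ²)/2 ). -/
open MeasureTheory ProbabilityTheory Real Set Filter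
open scoped ENNReal NNReal

/- `KL(N(μ, σ²) ‖ N(0, ω⁻¹))` as a real number, where `N` is the real Gaussian measure. -/
noncomputable def gaussKL (μ σ ω : ℝ) : ℝ :=
  (klDiv (gaussianReal μ (Real.toNNReal (σ ^ 2))) (gaussianReal 0 (Real.toNNReal ω⁻¹))).toReal

/- The functional `Φ(q) = ∫ KL(N(μ,σ²)‖N(0,ω⁻¹)) dq(ω) + KL(q ‖ Gamma(α₀, β₀))`. -/
noncomputable def sparseObjective (μ σ α₀ β₀ : ℝ) (q : Measure ℝ) : ℝ :=
  (∫ ω, gaussKL μ σ ω ∂q) + (klDiv q (gammaMeasure α₀ β₀)).toReal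


/- ## Auxiliary lemmas -/

lemma mul_log_sub_add_nonneg {t : ℝ} (ht : 0 ≤ t) : 0 ≤ t * Real.log t - t + 1 := by
  rcases eq_or_lt_of_le ht with h | h
  · simp [← h]
  · have h2 : Real.log t⁻¹ ≤ t⁻¹ - 1 := Real.log_le_sub_one_of_pos (by positivity)
    rw [Real.log_inv] at h2
    have := mul_le_mul_of_nonneg_left h2 h.le
    have h3 : t * t⁻¹ = 1 := mul_inv_cancel₀ h.ne'
    nlinarith

lemma mul_log_sub_add_eq_zero {t : ℝ} (ht : 0 ≤ t) (h : t * Real.log t - t + 1 = 0) : t = 1 := by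
  rcases eq_or_lt_of_le ht with h0 | h0
  · simp [← h0] at h
  · by_contra hne
    have h2 : Real.log t⁻¹ < t⁻¹ - 1 :=
      Real.log_lt_sub_one_of_pos (by positivity) (by simpa using fun hh => hne (by simpa using hh))
    rw [Real.log_inv] at h2
    have := mul_lt_mul_of_pos_left h2 h0
    rw [mul_sub] at this
    have h3 : t * t⁻¹ = 1 := mul_inv_cancel₀ h0.ne'
    nlinarith

/-- Gibbs' inequality with equality case. -/
lemma gibbs_llr {Ω : Type*} [MeasurableSpace Ω] (q p : Measure Ω)
    [IsProbabilityMeasure q] [IsProbabilityMeasure p] (hac : q ≪ p)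
    (hi : Integrable (llr q p) q) :
    0 ≤ ∫ x, llr q p x ∂q ∧ (∫ x, llr q p x ∂q = 0 → q = p) := by
  set ρ : Ω → ℝ := fun x => ((∂q/∂p) x).toReal with hρ
  have hsmul : (fun x => ρ x • llr q p x) = fun x => ρ x * Real.log (ρ x) := rfl
  have h1 : ∫ x, llr q p x ∂q = ∫ x, ρ x * Real.log (ρ x) ∂p := by
    rw [← integral_rnDeriv_smul hac (f := llr q p), hsmul]
  have hint1 : Integrable (fun x => ρ x * Real.log (ρ x)) p := by
    rw [← hsmul, integrable_rnDeriv_smul_iff hac]; exact hi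
  have hρint : Integrable ρ p := Measure.integrable_toReal_rnDeriv
  have hρnn : ∀ x, 0 ≤ ρ x := fun x => ENNReal.toReal_nonneg
  set g : Ω → ℝ := fun x => ρ x * Real.log (ρ x) - ρ x + 1 with hg
  have hgint : Integrable g p := (hint1.sub hρint).add (integrable_const 1)
  have hgnn : ∀ x, 0 ≤ g x := fun x => mul_log_sub_add_nonneg (hρnn x)
  have hρ1 : ∫ x, ρ x ∂p = 1 := by
    rw [hρ]
    rw [Measure.integral_toReal_rnDeriv hac]
    simp
  have h2 : ∫ x, g x ∂p = ∫ x, llr q p x ∂q := by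
    have e1 : ∫ x, g x ∂p
        = (∫ x, (ρ x * Real.log (ρ x) - ρ x) ∂p) + ∫ _, (1 : ℝ) ∂p :=
      integral_add (hint1.sub hρint) (integrable_const 1)
    have e2 : ∫ x, (ρ x * Real.log (ρ x) - ρ x) ∂p
        = (∫ x, ρ x * Real.log (ρ x) ∂p) - ∫ x, ρ x ∂p := integral_sub hint1 hρint
    rw [e1, e2, hρ1, h1]
    simp
  constructor
  · rw [← h2]; exact integral_nonneg hgnn
  · intro h0
    have hg0 : g =ᵐ[p] 0 := by
      rw [← integral_eq_zero_iff_of_nonneg hgnn hgint, h2, h0]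
    have hρeq : ρ =ᵐ[p] fun _ => 1 := by
      filter_upwards [hg0] with x hx
      exact mul_log_sub_add_eq_zero (hρnn x) hx
    have hrn1 : (∂q/∂p) =ᵐ[p] fun _ => (1 : ℝ≥0∞) := by
      filter_upwards [hρeq, Measure.rnDeriv_lt_top q p] with x hx hlt
      have : ((∂q/∂p) x).toReal = (1 : ℝ≥0∞).toReal := by simpa using hx
      exact (ENNReal.toReal_eq_toReal_iff' hlt.ne (by simp)).mp this
    calc q = p.withDensity (∂q/∂p) := (Measure.withDensity_rnDeriv_eq q p hac).symm
    _ = p.withDensity (fun _ => 1) := withDensity_congr_ae hrn1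
    _ = p := by simp [withDensity_one]

lemma sq_le_exp_half {b x : ℝ} (hb : 0 < b) : x ^ 2 ≤ (2 / b) * rexp (b / 2 * x ^ 2) := by
  have h1 : b / 2 * x ^ 2 ≤ rexp (b / 2 * x ^ 2) :=
    le_trans (by linarith [Real.add_one_le_exp (b / 2 * x ^ 2)]) le_rfl
  have h2 : b / 2 * x ^ 2 + 1 ≤ rexp (b / 2 * x ^ 2) := Real.add_one_le_exp _
  have hb2 : 0 < 2 / b := by positivity
  have h3 := mul_le_mul_of_nonneg_left h2 hb2.le
  have h4 : 2 / b * (b / 2 * x ^ 2) = x ^ 2 := by field_simp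
  nlinarith

lemma sq_mul_exp_le {b x : ℝ} (hb : 0 < b) :
    x ^ 2 * rexp (-b * x ^ 2) ≤ (2 / b) * rexp (-(b / 2) * x ^ 2) := by
  have h := mul_le_mul_of_nonneg_right (sq_le_exp_half hb (x := x)) (Real.exp_pos (-b * x ^ 2)).le
  calc x ^ 2 * rexp (-b * x ^ 2) ≤ 2 / b * rexp (b / 2 * x ^ 2) * rexp (-b * x ^ 2) := h
  _ = (2 / b) * rexp (-(b / 2) * x ^ 2) := by
      rw [mul_assoc, ← Real.exp_add]; ring_nf

lemma integrable_sq_mul_exp_neg_mul_sq {b : ℝ} (hb : 0 < b) :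
    Integrable (fun x : ℝ => x ^ 2 * rexp (-b * x ^ 2)) := by
  refine Integrable.mono' (((integrable_exp_neg_mul_sq (half_pos hb)).const_mul (2 / b))) ?_ ?_
  · exact (continuous_pow 2).aestronglyMeasurable.mul
      (Real.continuous_exp.comp (by continuity)).aestronglyMeasurable
  · refine ae_of_all _ fun x => ?_
    rw [Real.norm_eq_abs, abs_of_nonneg (by positivity)]
    have := sq_mul_exp_le (b := b) (x := x) hb
    simpa [neg_div] using this

lemma integrable_abs_mul_exp_neg_mul_sq {b : ℝ} (hb : 0 < b) :
    Integrable (fun x : ℝ => |x| * rexp (-b * x ^ 2)) := by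
  refine Integrable.mono' ((integrable_exp_neg_mul_sq hb).add (integrable_sq_mul_exp_neg_mul_sq hb)) ?_ ?_
  · exact (continuous_abs.mul (Real.continuous_exp.comp (by continuity))).aestronglyMeasurable
  · refine ae_of_all _ fun x => ?_
    rw [Real.norm_eq_abs, abs_of_nonneg (by positivity)]
    have h1 : |x| ≤ 1 + x ^ 2 := by nlinarith [abs_nonneg x, sq_abs x, sq_nonneg (|x| - 1)]
    have h2 := mul_le_mul_of_nonneg_right h1 (Real.exp_pos (-b * x ^ 2)).le
    calc |x| * rexp (-b * x ^ 2) ≤ (1 + x ^ 2) * rexp (-b * x ^ 2) := h2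
    _ = rexp (-b * x ^ 2) + x ^ 2 * rexp (-b * x ^ 2) := by ring

lemma tendsto_mul_exp_neg_mul_sq {b : ℝ} (hb : 0 < b) :
    Tendsto (fun x : ℝ => x * rexp (-b * x ^ 2)) atTop (nhds 0) := by
  have hg : Tendsto (fun x : ℝ => (2 / b) * rexp (-(b / 2) * x ^ 2)) atTop (nhds 0) := by
    rw [show (0 : ℝ) = (2 / b) * 0 by ring]
    exact (tendsto_exp_atBot.comp
      ((tendsto_pow_atTop two_ne_zero).const_mul_atTop_of_neg (by linarith))).const_mul _
  refine squeeze_zero' ?_ ?_ hg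
  · filter_upwards [eventually_ge_atTop (0 : ℝ)] with x hx
    positivity
  · filter_upwards [eventually_ge_atTop (1 : ℝ)] with x hx
    calc x * rexp (-b * x ^ 2) ≤ x ^ 2 * rexp (-b * x ^ 2) :=
          mul_le_mul_of_nonneg_right (by nlinarith) (Real.exp_pos _).le
    _ ≤ (2 / b) * rexp (-(b / 2) * x ^ 2) := sq_mul_exp_le hb

lemma integral_Ioi_sq_mul_exp_neg_mul_sq {b : ℝ} (hb : 0 < b) :
    ∫ x in Ioi (0:ℝ), x ^ 2 * rexp (-b * x ^ 2) = (1 / (2 * b)) * (Real.sqrt (π / b) / 2) := by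
  have hderiv : ∀ x ∈ Ici (0:ℝ), HasDerivAt (fun x : ℝ => -(1 / (2 * b)) * (x * rexp (-b * x ^ 2)))
      (x ^ 2 * rexp (-b * x ^ 2) - (1 / (2 * b)) * rexp (-b * x ^ 2)) x := by
    intro x _
    have h1 : HasDerivAt (fun x : ℝ => rexp (-b * x ^ 2)) (rexp (-b * x ^ 2) * (-b * (2 * x))) x := by
      have := ((hasDerivAt_pow 2 x).const_mul (-b)).exp
      simpa using this
    have h2 := (hasDerivAt_id x).mul h1
    have h3 := h2.const_mul (-(1 / (2 * b)))
    refine HasDerivAt.congr_deriv h3 ?_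
    have hb0 : b ≠ 0 := hb.ne'
    simp only [id]
    field_simp
    ring
  have hint : IntegrableOn (fun x : ℝ => x ^ 2 * rexp (-b * x ^ 2) - (1 / (2 * b)) * rexp (-b * x ^ 2)) (Ioi 0) := by
    exact ((integrable_sq_mul_exp_neg_mul_sq hb).sub
      ((integrable_exp_neg_mul_sq hb).const_mul _)).integrableOn
  have htend : Tendsto (fun x : ℝ => -(1 / (2 * b)) * (x * rexp (-b * x ^ 2))) atTop (nhds 0) := by
    rw [show (0:ℝ) = -(1 / (2 * b)) * 0 by ring]
    exact (tendsto_mul_exp_neg_mul_sq hb).const_mul _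
  have := integral_Ioi_of_hasDerivAt_of_tendsto' hderiv hint htend
  rw [integral_sub ((integrable_sq_mul_exp_neg_mul_sq hb).integrableOn)
    (((integrable_exp_neg_mul_sq hb).const_mul _).integrableOn)] at this
  rw [integral_const_mul, integral_gaussian_Ioi] at this
  simp only [mul_zero, zero_mul, Real.exp_zero, mul_one, sub_zero] at this
  linarith [this]

lemma integral_sq_mul_exp_neg_mul_sq {b : ℝ} (hb : 0 < b) :
    ∫ x : ℝ, x ^ 2 * rexp (-b * x ^ 2) = (1 / (2 * b)) * Real.sqrt (π / b) := by
  have h : (fun x : ℝ => x ^ 2 * rexp (-b * x ^ 2))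
      = fun x : ℝ => |x| ^ 2 * rexp (-b * |x| ^ 2) := by
    funext x; rw [sq_abs]
  rw [h, integral_comp_abs (f := fun x : ℝ => x ^ 2 * rexp (-b * x ^ 2)),
    integral_Ioi_sq_mul_exp_neg_mul_sq hb]
  ring

lemma integral_self_mul_exp_neg_mul_sq {b : ℝ} (hb : 0 < b) :
    ∫ x : ℝ, x * rexp (-b * x ^ 2) = 0 := by
  have h := integral_neg_eq_self (fun x : ℝ => x * rexp (-b * x ^ 2)) volume
  simp only [neg_sq, neg_mul] at h
  have : ∫ x : ℝ, -(x * rexp (-b * x ^ 2)) = ∫ x : ℝ, x * rexp (-b * x ^ 2) := by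
    simpa using h
  rw [integral_neg] at this
  linarith


/-- Transfer integrability through a `withDensity` of an `ofReal` density. -/
lemma integrable_withDensity_ofReal_iff {p : ℝ → ℝ} (hp : Measurable p) (hpnn : ∀ x, 0 ≤ p x)
    {g : ℝ → ℝ} :
    Integrable g (volume.withDensity (fun x => ENNReal.ofReal (p x))) ↔
      Integrable (fun x => g x * p x) volume := by
  rw [integrable_withDensity_iff hp.ennreal_ofReal
    (ae_of_all _ fun x => ENNReal.ofReal_lt_top)]
  refine integrable_congr (ae_of_all _ fun x => ?_)
  show g x * (ENNReal.ofReal (p x)).toReal = g x * p x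
  rw [ENNReal.toReal_ofReal (hpnn x)]

lemma integral_withDensity_ofReal {p : ℝ → ℝ} (hp : Measurable p) (hpnn : ∀ x, 0 ≤ p x)
    (g : ℝ → ℝ) :
    ∫ x, g x ∂(volume.withDensity (fun x => ENNReal.ofReal (p x))) = ∫ x, g x * p x := by
  have h : (fun x => ENNReal.ofReal (p x)) = fun x => ((p x).toNNReal : ℝ≥0∞) := rfl
  rw [h, integral_withDensity_eq_integral_smul hp.real_toNNReal]
  congr 1
  funext x
  simp only [NNReal.smul_def, smul_eq_mul, Real.coe_toNNReal _ (hpnn x)]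
  ring

lemma gaussianPDFReal_eq (m : ℝ) (v : ℝ≥0) (hv : v ≠ 0) (x : ℝ) :
    gaussianPDFReal m v x
      = (Real.sqrt (2 * π * v))⁻¹ * rexp (-((2 * (v:ℝ))⁻¹) * (x - m) ^ 2) := by
  rw [gaussianPDFReal]
  congr 1
  ring

lemma integrable_gaussianReal_iff {m : ℝ} {v : ℝ≥0} (hv : v ≠ 0) {g : ℝ → ℝ} :
    Integrable g (gaussianReal m v) ↔
      Integrable (fun x => g x * gaussianPDFReal m v x) volume := by
  rw [gaussianReal_of_var_ne_zero _ hv]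
  exact integrable_withDensity_ofReal_iff (measurable_gaussianPDFReal m v)
    (gaussianPDFReal_nonneg m v)

lemma integral_fun_gaussianReal {m : ℝ} {v : ℝ≥0} (hv : v ≠ 0) (g : ℝ → ℝ) :
    ∫ x, g x ∂(gaussianReal m v) = ∫ x, g x * gaussianPDFReal m v x := by
  rw [gaussianReal_of_var_ne_zero _ hv]
  exact integral_withDensity_ofReal (measurable_gaussianPDFReal m v)
    (gaussianPDFReal_nonneg m v) g

section moments
variable {m : ℝ} {v : ℝ≥0} (hv : v ≠ 0)

lemma vpos (hv : v ≠ 0) : 0 < (v:ℝ) := by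
  exact_mod_cast pos_iff_ne_zero.mpr hv

lemma bpos (hv : v ≠ 0) : 0 < ((2 * (v:ℝ))⁻¹) := by
  have := vpos hv; positivity

-- centered integrability against the pdf, on volume
lemma integrable_id_mul_pdf (hv : v ≠ 0) :
    Integrable (fun x => x * gaussianPDFReal m v x) volume := by
  have hb := bpos hv
  have h0 : Integrable (fun y : ℝ => (y + m) * gaussianPDFReal m v (y + m)) volume → 
      Integrable (fun x => x * gaussianPDFReal m v x) volume := by
    intro h
    exact ((measurePreserving_add_right volume m).integrable_comp_emb
      (Homeomorph.addRight m).measurableEmbedding).mp h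
  apply h0
  have hpdf : ∀ y : ℝ, gaussianPDFReal m v (y + m)
      = (Real.sqrt (2 * π * v))⁻¹ * rexp (-((2 * (v:ℝ))⁻¹) * y ^ 2) := by
    intro y
    rw [gaussianPDFReal_add, gaussianPDFReal_eq _ _ hv]
    simp
  simp only [hpdf]
  have h1 : Integrable (fun y : ℝ => y * rexp (-((2 * (v:ℝ))⁻¹) * y ^ 2)) volume :=
    integrable_mul_exp_neg_mul_sq hb
  have h2 : Integrable (fun y : ℝ => rexp (-((2 * (v:ℝ))⁻¹) * y ^ 2)) volume :=
    integrable_exp_neg_mul_sq hb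
  have := (h1.add (h2.const_mul m)).const_mul ((Real.sqrt (2 * π * v))⁻¹)
  refine this.congr (ae_of_all _ fun y => ?_)
  simp only [Pi.add_apply]
  ring

lemma integrable_sq_mul_pdf (hv : v ≠ 0) :
    Integrable (fun x => x ^ 2 * gaussianPDFReal m v x) volume := by
  have hb := bpos hv
  have h0 : Integrable (fun y : ℝ => (y + m) ^ 2 * gaussianPDFReal m v (y + m)) volume → 
      Integrable (fun x => x ^ 2 * gaussianPDFReal m v x) volume := by
    intro h
    exact ((measurePreserving_add_right volume m).integrable_comp_emb
      (Homeomorph.addRight m).measurableEmbedding).mp h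
  apply h0
  have hpdf : ∀ y : ℝ, gaussianPDFReal m v (y + m)
      = (Real.sqrt (2 * π * v))⁻¹ * rexp (-((2 * (v:ℝ))⁻¹) * y ^ 2) := by
    intro y
    rw [gaussianPDFReal_add, gaussianPDFReal_eq _ _ hv]
    simp
  simp only [hpdf]
  have h1 : Integrable (fun y : ℝ => y * rexp (-((2 * (v:ℝ))⁻¹) * y ^ 2)) volume :=
    integrable_mul_exp_neg_mul_sq hb
  have h2 : Integrable (fun y : ℝ => rexp (-((2 * (v:ℝ))⁻¹) * y ^ 2)) volume :=
    integrable_exp_neg_mul_sq hb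
  have h3 : Integrable (fun y : ℝ => y ^ 2 * rexp (-((2 * (v:ℝ))⁻¹) * y ^ 2)) volume :=
    integrable_sq_mul_exp_neg_mul_sq hb
  have := ((h3.add ((h1.const_mul (2*m)))).add (h2.const_mul (m^2))).const_mul
    ((Real.sqrt (2 * π * v))⁻¹)
  refine this.congr (ae_of_all _ fun y => ?_)
  simp only [Pi.add_apply]
  ring

lemma integrable_id_gaussianReal (hv : v ≠ 0) : Integrable (fun x => x) (gaussianReal m v) :=
  (integrable_gaussianReal_iff hv).mpr (integrable_id_mul_pdf hv)

lemma integrable_sq_gaussianReal (hv : v ≠ 0) :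
    Integrable (fun x => x ^ 2) (gaussianReal m v) :=
  (integrable_gaussianReal_iff hv).mpr (integrable_sq_mul_pdf hv)

lemma sqrt_ne (hv : v ≠ 0) : (Real.sqrt (2 * π * v)) ≠ 0 := by
  have := vpos hv
  have : (0:ℝ) < 2 * π * v := by positivity
  positivity

lemma csqrtb (hv : v ≠ 0) :
    (1 / (2 * ((2 * (v:ℝ))⁻¹))) * Real.sqrt (π / ((2 * (v:ℝ))⁻¹)) = (v:ℝ) * Real.sqrt (2 * π * v) := by
  have hvp := vpos hv
  rw [show π / ((2 * (v:ℝ))⁻¹) = 2 * π * v by field_simp]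
  congr 1
  field_simp

/-- Second moment of a centered-then-shifted Gaussian. -/
lemma integral_sq_gaussianReal (hv : v ≠ 0) :
    ∫ x, x ^ 2 ∂(gaussianReal m v) = m ^ 2 + (v:ℝ) := by
  have hb := bpos hv
  have hvp := vpos hv
  rw [integral_fun_gaussianReal hv]
  have hshift := integral_add_right_eq_self (μ := volume) (fun x => x ^ 2 * gaussianPDFReal m v x) m
  rw [← hshift]
  have hpdf : ∀ y : ℝ, gaussianPDFReal m v (y + m)
      = (Real.sqrt (2 * π * v))⁻¹ * rexp (-((2 * (v:ℝ))⁻¹) * y ^ 2) := by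
    intro y
    rw [gaussianPDFReal_add, gaussianPDFReal_eq _ _ hv]
    simp
  have h1 : Integrable (fun y : ℝ => y * rexp (-((2 * (v:ℝ))⁻¹) * y ^ 2)) volume :=
    integrable_mul_exp_neg_mul_sq hb
  have h2 : Integrable (fun y : ℝ => rexp (-((2 * (v:ℝ))⁻¹) * y ^ 2)) volume :=
    integrable_exp_neg_mul_sq hb
  have h3 : Integrable (fun y : ℝ => y ^ 2 * rexp (-((2 * (v:ℝ))⁻¹) * y ^ 2)) volume :=
    integrable_sq_mul_exp_neg_mul_sq hb
  have heq : ∀ y : ℝ, (y + m) ^ 2 * gaussianPDFReal m v (y + m)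
      = (Real.sqrt (2 * π * v))⁻¹ *
        (y ^ 2 * rexp (-((2 * (v:ℝ))⁻¹) * y ^ 2)
          + (2*m) * (y * rexp (-((2 * (v:ℝ))⁻¹) * y ^ 2))
          + m ^ 2 * rexp (-((2 * (v:ℝ))⁻¹) * y ^ 2)) := by
    intro y
    rw [hpdf y]
    ring
  rw [integral_congr_ae (ae_of_all _ heq), integral_const_mul]
  have ea : ∫ a : ℝ, (a ^ 2 * rexp (-((2 * (v:ℝ))⁻¹) * a ^ 2)
        + (2*m) * (a * rexp (-((2 * (v:ℝ))⁻¹) * a ^ 2))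
        + m ^ 2 * rexp (-((2 * (v:ℝ))⁻¹) * a ^ 2))
      = (∫ a : ℝ, (a ^ 2 * rexp (-((2 * (v:ℝ))⁻¹) * a ^ 2)
        + (2*m) * (a * rexp (-((2 * (v:ℝ))⁻¹) * a ^ 2))))
        + ∫ a : ℝ, m ^ 2 * rexp (-((2 * (v:ℝ))⁻¹) * a ^ 2) :=
    integral_add (h3.add (h1.const_mul _)) (h2.const_mul _)
  have eb : ∫ a : ℝ, (a ^ 2 * rexp (-((2 * (v:ℝ))⁻¹) * a ^ 2)
        + (2*m) * (a * rexp (-((2 * (v:ℝ))⁻¹) * a ^ 2)))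
      = (∫ a : ℝ, a ^ 2 * rexp (-((2 * (v:ℝ))⁻¹) * a ^ 2))
        + ∫ a : ℝ, (2*m) * (a * rexp (-((2 * (v:ℝ))⁻¹) * a ^ 2)) :=
    integral_add h3 (h1.const_mul _)
  rw [ea, eb, integral_const_mul, integral_const_mul,
    integral_sq_mul_exp_neg_mul_sq hb, integral_self_mul_exp_neg_mul_sq hb,
    csqrtb hv]
  have h2' : ∫ y : ℝ, rexp (-((2 * (v:ℝ))⁻¹) * y ^ 2) = Real.sqrt (2 * π * v) := by
    rw [integral_gaussian, show π / ((2 * (v:ℝ))⁻¹) = 2 * π * v by field_simp]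
  rw [h2']
  have hs := sqrt_ne hv
  field_simp
  ring

lemma integral_id_gaussianReal (hv : v ≠ 0) :
    ∫ x, x ∂(gaussianReal m v) = m := by
  have hb := bpos hv
  have hvp := vpos hv
  rw [integral_fun_gaussianReal hv (fun x => x)]
  have hshift := integral_add_right_eq_self (μ := volume) (fun x => x * gaussianPDFReal m v x) m
  rw [← hshift]
  have hpdf : ∀ y : ℝ, gaussianPDFReal m v (y + m)
      = (Real.sqrt (2 * π * v))⁻¹ * rexp (-((2 * (v:ℝ))⁻¹) * y ^ 2) := by
    intro y
    rw [gaussianPDFReal_add, gaussianPDFReal_eq _ _ hv]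
    simp
  have h1 : Integrable (fun y : ℝ => y * rexp (-((2 * (v:ℝ))⁻¹) * y ^ 2)) volume :=
    integrable_mul_exp_neg_mul_sq hb
  have h2 : Integrable (fun y : ℝ => rexp (-((2 * (v:ℝ))⁻¹) * y ^ 2)) volume :=
    integrable_exp_neg_mul_sq hb
  have heq : ∀ y : ℝ, (y + m) * gaussianPDFReal m v (y + m)
      = (Real.sqrt (2 * π * v))⁻¹ *
        ((y * rexp (-((2 * (v:ℝ))⁻¹) * y ^ 2))
          + m * rexp (-((2 * (v:ℝ))⁻¹) * y ^ 2)) := by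
    intro y
    rw [hpdf y]
    ring
  rw [integral_congr_ae (ae_of_all _ heq), integral_const_mul]
  have ea : ∫ a : ℝ, (a * rexp (-((2 * (v:ℝ))⁻¹) * a ^ 2)
        + m * rexp (-((2 * (v:ℝ))⁻¹) * a ^ 2))
      = (∫ a : ℝ, a * rexp (-((2 * (v:ℝ))⁻¹) * a ^ 2))
        + ∫ a : ℝ, m * rexp (-((2 * (v:ℝ))⁻¹) * a ^ 2) :=
    integral_add h1 (h2.const_mul _)
  rw [ea, integral_const_mul, integral_self_mul_exp_neg_mul_sq hb]
  have h2' : ∫ y : ℝ, rexp (-((2 * (v:ℝ))⁻¹) * y ^ 2) = Real.sqrt (2 * π * v) := by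
    rw [integral_gaussian, show π / ((2 * (v:ℝ))⁻¹) = 2 * π * v by field_simp]
  rw [h2']
  have hs := sqrt_ne hv
  field_simp
  ring

/-- `E[(x-m)^2] = v`. -/
lemma integral_sub_sq_gaussianReal (hv : v ≠ 0) :
    ∫ x, (x - m) ^ 2 ∂(gaussianReal m v) = (v:ℝ) := by
  have h : ∀ x : ℝ, (x - m) ^ 2 = x ^ 2 - (2*m) * x + m ^ 2 := fun x => by ring
  rw [integral_congr_ae (ae_of_all _ h)]
  have e1 : ∫ a, (a ^ 2 - (2*m) * a + m ^ 2) ∂(gaussianReal m v)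
      = (∫ a, (a ^ 2 - (2*m) * a) ∂(gaussianReal m v)) + ∫ _, (m ^ 2 : ℝ) ∂(gaussianReal m v) :=
    integral_add ((integrable_sq_gaussianReal hv).sub ((integrable_id_gaussianReal hv).const_mul _))
      (integrable_const _)
  have e2 : ∫ a, (a ^ 2 - (2*m) * a) ∂(gaussianReal m v)
      = (∫ a, a ^ 2 ∂(gaussianReal m v)) - ∫ a, (2*m) * a ∂(gaussianReal m v) :=
    integral_sub (integrable_sq_gaussianReal hv) ((integrable_id_gaussianReal hv).const_mul _)
  rw [e1, e2, integral_const_mul, integral_sq_gaussianReal hv, integral_id_gaussianReal hv]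
  simp
  ring
end moments


lemma ae_volume_ne_zero : ∀ᵐ x : ℝ ∂volume, x ≠ 0 := by
  refine ae_iff.mpr ?_
  have h : {x : ℝ | ¬ x ≠ 0} = {0} := by ext x; simp
  rw [h]
  exact measure_singleton 0

lemma gammaMeasure_ae_pos {a r : ℝ} : ∀ᵐ ω ∂(gammaMeasure a r), 0 < ω := by
  refine ae_iff.mpr ?_
  have hset : {ω : ℝ | ¬ 0 < ω} = Iic 0 := by ext x; simp
  rw [hset, gammaMeasure, withDensity_apply _ measurableSet_Iic]
  have h : ∀ᵐ x ∂(volume.restrict (Iic 0)), gammaPDF a r x = 0 := by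
    rw [ae_restrict_iff' measurableSet_Iic]
    filter_upwards [ae_volume_ne_zero] with x hx hx0
    exact gammaPDF_of_neg (lt_of_le_of_ne hx0 hx)
  rw [lintegral_congr_ae h, lintegral_zero]

lemma integrable_gammaMeasure_iff {a r : ℝ} (ha : 0 < a) (hr : 0 < r) {g : ℝ → ℝ} :
    Integrable g (gammaMeasure a r) ↔
      Integrable (fun x => g x * gammaPDFReal a r x) volume := by
  rw [gammaMeasure, show gammaPDF a r = fun x => ENNReal.ofReal (gammaPDFReal a r x) from rfl]
  exact integrable_withDensity_ofReal_iff (measurable_gammaPDFReal a r)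
    (gammaPDFReal_nonneg ha hr)

lemma integrable_on_Ioi_to_volume {F : ℝ → ℝ} (hmeas : AEStronglyMeasurable F volume)
    (hzero : ∀ x : ℝ, x < 0 → F x = 0) (h : IntegrableOn F (Ioi 0)) :
    Integrable F volume := by
  have h2 : IntegrableOn F (Iic 0) := by
    refine (integrable_congr ?_).mpr (integrable_zero _ _ (volume.restrict (Iic 0)))
    rw [EventuallyEq, ae_restrict_iff' measurableSet_Iic]
    filter_upwards [ae_volume_ne_zero] with x hx hx0
    exact hzero x (lt_of_le_of_ne hx0 hx)
  have h3 := h2.union h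
  rwa [Iic_union_Ioi, integrableOn_univ] at h3

lemma integrableOn_rpow_mul_exp_neg {s b : ℝ} (hs : -1 < s) (hb : 0 < b) :
    IntegrableOn (fun x : ℝ => x ^ s * rexp (-b * x)) (Ioi 0) := by
  have h := integrableOn_rpow_mul_exp_neg_mul_rpow (p := 1) hs one_pos hb
  refine (integrableOn_congr_fun (fun x hx => ?_) measurableSet_Ioi).mp h
  rw [Real.rpow_one]

lemma measurable_gammaPDFReal' (a r : ℝ) : Measurable (gammaPDFReal a r) :=
  measurable_gammaPDFReal a r

lemma integrable_id_gammaMeasure {a r : ℝ} (ha : 0 < a) (hr : 0 < r) :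
    Integrable (fun x : ℝ => x) (gammaMeasure a r) := by
  rw [integrable_gammaMeasure_iff ha hr]
  refine integrable_on_Ioi_to_volume
    ((measurable_id.mul (measurable_gammaPDFReal a r)).aestronglyMeasurable) ?_ ?_
  · intro x hx
    rw [gammaPDFReal, if_neg (not_le.mpr hx), mul_zero]
  · have h := (integrableOn_rpow_mul_exp_neg (s := a) (by linarith) hr).const_mul
      (r ^ a / Real.Gamma a)
    refine (integrableOn_congr_fun (fun x hx => ?_) measurableSet_Ioi).mp h
    have hx : (0:ℝ) < x := hx
    rw [gammaPDFReal, if_pos hx.le]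
    have hpow : x ^ (a - 1) * x = x ^ a := by
      rw [← Real.rpow_add_one hx.ne' (a-1)]
      ring_nf
    field_simp
    rw [← hpow]
    ring

lemma abs_log_le {a : ℝ} (ha : 0 < a) {x : ℝ} (hx : 0 < x) :
    |Real.log x| ≤ (2/a) * x ^ (-(a/2)) + x := by
  have hxa : (0:ℝ) < x ^ (-(a/2)) := Real.rpow_pos_of_pos hx _
  rcases le_or_gt 1 x with h1 | h1
  · rw [abs_of_nonneg (Real.log_nonneg h1)]
    have := Real.log_le_sub_one_of_pos hx
    have h2 : 0 ≤ (2/a) * x ^ (-(a/2)) := by positivity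
    linarith
  · rw [abs_of_nonpos (Real.log_nonpos hx.le h1.le)]
    have ht : (0:ℝ) < x ^ (-(a/2)) := hxa
    have hlog : Real.log (x ^ (-(a/2))) ≤ x ^ (-(a/2)) - 1 := Real.log_le_sub_one_of_pos ht
    rw [Real.log_rpow hx] at hlog
    -- -(a/2) * log x ≤ x ^ (-(a/2)) - 1
    have h2 : -Real.log x ≤ (2/a) * (x ^ (-(a/2)) - 1) := by
      have := mul_le_mul_of_nonneg_left hlog (by positivity : (0:ℝ) ≤ 2/a)
      have ha' : (2/a) * (-(a/2) * Real.log x) = -Real.log x := by field_simp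
      linarith [ha' ▸ this]
    have h3 : (2/a) * (x ^ (-(a/2)) - 1) ≤ (2/a) * x ^ (-(a/2)) := by
      have : (0:ℝ) < 2/a := by positivity
      nlinarith
    linarith

lemma integrable_log_gammaMeasure {a r : ℝ} (ha : 0 < a) (hr : 0 < r) :
    Integrable Real.log (gammaMeasure a r) := by
  rw [integrable_gammaMeasure_iff ha hr]
  refine integrable_on_Ioi_to_volume
    ((Real.measurable_log.mul (measurable_gammaPDFReal a r)).aestronglyMeasurable) ?_ ?_
  · intro x hx
    rw [gammaPDFReal, if_neg (not_le.mpr hx), mul_zero]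
  · have hΓ : 0 < Real.Gamma a := Real.Gamma_pos_of_pos ha
    have hC : 0 < r ^ a / Real.Gamma a := by positivity
    set C := r ^ a / Real.Gamma a with hCdef
    have hint1 : IntegrableOn (fun x : ℝ => x ^ (a/2 - 1) * rexp (-r * x)) (Ioi 0) :=
      integrableOn_rpow_mul_exp_neg (by linarith) hr
    have hint2 : IntegrableOn (fun x : ℝ => x ^ a * rexp (-r * x)) (Ioi 0) :=
      integrableOn_rpow_mul_exp_neg (by linarith) hr
    have hgint : IntegrableOn (fun x : ℝ =>
        C * (2/a) * (x ^ (a/2 - 1) * rexp (-r * x)) + C * (x ^ a * rexp (-r * x))) (Ioi 0) :=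
      (hint1.const_mul _).add (hint2.const_mul _)
    refine Integrable.mono' hgint
      ((Real.measurable_log.mul (measurable_gammaPDFReal a r)).aestronglyMeasurable.restrict) ?_
    rw [ae_restrict_iff' measurableSet_Ioi]
    refine ae_of_all _ fun x hx => ?_
    have hx : (0:ℝ) < x := hx
    rw [Real.norm_eq_abs, abs_mul, gammaPDFReal, if_pos hx.le,
      abs_of_nonneg (by positivity : (0:ℝ) ≤ C * x ^ (a-1) * rexp (-(r*x)))]
    have hbound := abs_log_le ha hx
    have hfac : (0:ℝ) < C * x ^ (a-1) * rexp (-(r*x)) := by positivity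
    have h1 := mul_le_mul_of_nonneg_right hbound hfac.le
    refine h1.trans (le_of_eq ?_)
    have e1 : x ^ (-(a/2)) * x ^ (a - 1) = x ^ (a/2 - 1) := by
      rw [← Real.rpow_add hx]
      ring_nf
    have e2 : x * x ^ (a - 1) = x ^ a := by
      rw [mul_comm, ← Real.rpow_add_one hx.ne' (a-1)]
      ring_nf
    rw [neg_mul, ← e1, ← e2]
    ring

lemma integrable_exp_tilt_gammaMeasure {a r δ : ℝ} (ha : 0 < a) (hr : 0 < r) (hδ : 0 ≤ δ) :
    Integrable (fun x => rexp ((1/2) * Real.log x - δ * x)) (gammaMeasure a r) := by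
  rw [integrable_gammaMeasure_iff ha hr]
  refine integrable_on_Ioi_to_volume
    (((Real.measurable_log.const_mul _).sub (measurable_id.const_mul δ)).exp.mul
      (measurable_gammaPDFReal a r)).aestronglyMeasurable ?_ ?_
  · intro x hx
    rw [gammaPDFReal, if_neg (not_le.mpr hx), mul_zero]
  · have h := (integrableOn_rpow_mul_exp_neg (s := a - 1/2) (by linarith) (by linarith : 0 < r + δ)).const_mul
      (r ^ a / Real.Gamma a)
    refine (integrableOn_congr_fun (fun x hx => ?_) measurableSet_Ioi).mp h
    have hx : (0:ℝ) < x := hx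
    rw [gammaPDFReal, if_pos hx.le]
    have e0 : rexp ((1/2) * Real.log x - δ * x) = x ^ ((1:ℝ)/2) * rexp (-δ * x) := by
      rw [Real.exp_sub, Real.rpow_def_of_pos hx]
      rw [mul_comm (Real.log x) ((1:ℝ)/2)]
      rw [show -δ * x = -(δ * x) from by ring, Real.exp_neg]
      rfl
    have e1 : x ^ ((1:ℝ)/2) * x ^ (a - 1) = x ^ (a - 1/2) := by
      rw [← Real.rpow_add hx]
      ring_nf
    have e2 : rexp (-δ * x) * rexp (-(r * x)) = rexp (-(r + δ) * x) := by
      rw [← Real.exp_add]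
      ring_nf
    calc r ^ a / Real.Gamma a * (x ^ (a - 1/2) * rexp (-(r + δ) * x))
        = r ^ a / Real.Gamma a * ((x ^ ((1:ℝ)/2) * x ^ (a-1)) * (rexp (-δ * x) * rexp (-(r * x)))) := by
          rw [e1, e2]
    _ = rexp ((1/2) * Real.log x - δ * x) * (r ^ a / Real.Gamma a * x ^ (a - 1) * rexp (-(r * x))) := by
          rw [e0]; ring


section gaussKL
variable {μ σ ω : ℝ}

lemma llr_gaussian_ae (hσ : 0 < σ) (hω : 0 < ω) :
    llr (gaussianReal μ (Real.toNNReal (σ ^ 2))) (gaussianReal 0 (Real.toNNReal ω⁻¹))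
      =ᵐ[gaussianReal μ (Real.toNNReal (σ ^ 2))]
    fun x => Real.log (gaussianPDFReal μ (Real.toNNReal (σ ^ 2)) x)
      - Real.log (gaussianPDFReal 0 (Real.toNNReal ω⁻¹) x) := by
  set v := Real.toNNReal (σ ^ 2) with hvdef
  set w := Real.toNNReal ω⁻¹ with hwdef
  have hv : v ≠ 0 := by
    simp [hvdef, Real.toNNReal_eq_zero, not_le]
    positivity
  have hw : w ≠ 0 := by
    simp [hwdef, Real.toNNReal_eq_zero, not_le]
    positivity
  set Q := gaussianReal μ v
  set P := gaussianReal 0 w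
  have hQv : Q ≪ volume := gaussianReal_absolutelyContinuous _ hv
  have hPv : P ≪ volume := gaussianReal_absolutelyContinuous _ hw
  have hvP : volume ≪ P := gaussianReal_absolutelyContinuous' _ hw
  have hQP : Q ≪ P := hQv.trans hvP
  have h1 : ∂Q/∂volume * ∂volume/∂P =ᵐ[P] ∂Q/∂P := Measure.rnDeriv_mul_rnDeriv hQv
  have h2 : (∂P/∂volume)⁻¹ =ᵐ[P] ∂volume/∂P := Measure.inv_rnDeriv hPv
  have h3 : ∂Q/∂volume =ᵐ[P] gaussianPDF μ v := hPv.ae_le (rnDeriv_gaussianReal μ v)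
  have h4 : ∂P/∂volume =ᵐ[P] gaussianPDF 0 w := hPv.ae_le (rnDeriv_gaussianReal 0 w)
  have h5 : ∂Q/∂P =ᵐ[P] fun x => gaussianPDF μ v x * (gaussianPDF 0 w x)⁻¹ := by
    filter_upwards [h1, h2, h3, h4] with x hx1 hx2 hx3 hx4
    rw [← hx1]
    simp only [Pi.mul_apply, Pi.inv_apply] at *
    rw [hx3, ← hx2, hx4]
  filter_upwards [hQP.ae_le h5] with x hx
  rw [llr, hx]
  have hpv : 0 < gaussianPDFReal μ v x := gaussianPDFReal_pos _ _ _ hv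
  have hpw : 0 < gaussianPDFReal 0 w x := gaussianPDFReal_pos _ _ _ hw
  rw [gaussianPDF, gaussianPDF, ← ENNReal.ofReal_inv_of_pos hpw, ← ENNReal.ofReal_mul hpv.le,
    ENNReal.toReal_ofReal (by positivity)]
  rw [Real.log_mul hpv.ne' (by positivity), Real.log_inv]
  ring

lemma log_gaussianPDFReal (m : ℝ) (v : ℝ≥0) (hv : v ≠ 0) (x : ℝ) :
    Real.log (gaussianPDFReal m v x)
      = -(1/2) * Real.log (2 * π * v) - (x - m) ^ 2 / (2 * v) := by
  have hvp : (0:ℝ) < v := by exact_mod_cast pos_iff_ne_zero.mpr hv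
  have h2πv : (0:ℝ) < 2 * π * v := by positivity
  rw [gaussianPDFReal, Real.log_mul (by positivity) (Real.exp_pos _).ne', Real.log_exp,
    Real.log_inv, Real.log_sqrt h2πv.le]
  ring

lemma gaussKL_eq (hσ : 0 < σ) (hω : 0 < ω) :
    gaussKL μ σ ω
      = (μ ^ 2 + σ ^ 2) / 2 * ω - 1/2 - Real.log σ - (1/2) * Real.log ω := by
  set v := Real.toNNReal (σ ^ 2) with hvdef
  set w := Real.toNNReal ω⁻¹ with hwdef
  have hv : v ≠ 0 := by
    simp [hvdef, Real.toNNReal_eq_zero, not_le]; positivity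
  have hw : w ≠ 0 := by
    simp [hwdef, Real.toNNReal_eq_zero, not_le]; positivity
  have hvr : (v:ℝ) = σ ^ 2 := Real.coe_toNNReal _ (sq_nonneg σ)
  have hwr : (w:ℝ) = ω⁻¹ := Real.coe_toNNReal _ (by positivity)
  set Q := gaussianReal μ v
  set P := gaussianReal 0 w
  have hQP : Q ≪ P :=
    (gaussianReal_absolutelyContinuous _ hv).trans (gaussianReal_absolutelyContinuous' _ hw)
  have hae := llr_gaussian_ae (μ := μ) hσ hω
  -- the log-density as an explicit function
  have hL : ∀ x : ℝ, Real.log (gaussianPDFReal μ v x) - Real.log (gaussianPDFReal 0 w x)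
      = (-(1/2) * Real.log (2 * π * v) + (1/2) * Real.log (2 * π * w))
        + (2 * w : ℝ)⁻¹ * x ^ 2 - (2 * v : ℝ)⁻¹ * (x - μ) ^ 2 := by
    intro x
    rw [log_gaussianPDFReal μ v hv, log_gaussianPDFReal 0 w hw]
    push_cast
    field_simp
    ring
  have hLint : Integrable (fun x => Real.log (gaussianPDFReal μ v x)
      - Real.log (gaussianPDFReal 0 w x)) Q := by
    have : Integrable (fun x : ℝ => (-(1/2) * Real.log (2 * π * v) + (1/2) * Real.log (2 * π * w))
        + (2 * w : ℝ)⁻¹ * x ^ 2 - (2 * v : ℝ)⁻¹ * (x - μ) ^ 2) Q := by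
      have hsq : Integrable (fun x : ℝ => x ^ 2) Q := integrable_sq_gaussianReal hv
      have hid : Integrable (fun x : ℝ => x) Q := integrable_id_gaussianReal hv
      have hsub : Integrable (fun x : ℝ => (x - μ) ^ 2) Q := by
        have : Integrable (fun x : ℝ => x ^ 2 - (2 * μ) * x + μ ^ 2) Q :=
          (hsq.sub (hid.const_mul _)).add (integrable_const _)
        refine this.congr (ae_of_all _ fun x => by ring)
      exact ((integrable_const _).add (hsq.const_mul _)).sub (hsub.const_mul _)
    refine this.congr (ae_of_all _ fun x => (hL x).symm)
  have hllr_int : Integrable (llr Q P) Q := by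
    rw [integrable_congr hae]; exact hLint
  have hI : ∫ x, llr Q P x ∂Q
      = (-(1/2) * Real.log (2 * π * v) + (1/2) * Real.log (2 * π * w))
        + (2 * w : ℝ)⁻¹ * (μ ^ 2 + (v:ℝ)) - (2 * v : ℝ)⁻¹ * (v:ℝ) := by
    rw [integral_congr_ae hae, integral_congr_ae (ae_of_all _ hL)]
    have hsq : Integrable (fun x : ℝ => x ^ 2) Q := integrable_sq_gaussianReal hv
    have hid : Integrable (fun x : ℝ => x) Q := integrable_id_gaussianReal hv
    have hsub : Integrable (fun x : ℝ => (x - μ) ^ 2) Q := by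
      have : Integrable (fun x : ℝ => x ^ 2 - (2 * μ) * x + μ ^ 2) Q :=
        (hsq.sub (hid.const_mul _)).add (integrable_const _)
      refine this.congr (ae_of_all _ fun x => by ring)
    have e1 : ∫ x, ((-(1/2) * Real.log (2 * π * v) + (1/2) * Real.log (2 * π * w))
        + (2 * w : ℝ)⁻¹ * x ^ 2 - (2 * v : ℝ)⁻¹ * (x - μ) ^ 2) ∂Q
        = (∫ x, ((-(1/2) * Real.log (2 * π * v) + (1/2) * Real.log (2 * π * w))
          + (2 * w : ℝ)⁻¹ * x ^ 2) ∂Q) - ∫ x, (2 * v : ℝ)⁻¹ * (x - μ) ^ 2 ∂Q :=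
      integral_sub ((integrable_const _).add (hsq.const_mul _)) (hsub.const_mul _)
    have e2 : ∫ x, ((-(1/2) * Real.log (2 * π * v) + (1/2) * Real.log (2 * π * w))
          + (2 * w : ℝ)⁻¹ * x ^ 2) ∂Q
        = (∫ _, ((-(1/2) * Real.log (2 * π * v) + (1/2) * Real.log (2 * π * w)) : ℝ) ∂Q)
          + ∫ x, (2 * w : ℝ)⁻¹ * x ^ 2 ∂Q :=
      integral_add (integrable_const _) (hsq.const_mul _)
    rw [e1, e2, integral_const_mul, integral_const_mul, integral_sq_gaussianReal hv,
      integral_sub_sq_gaussianReal hv, integral_const]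
    simp
  -- final value
  have hval : ∫ x, llr Q P x ∂Q
      = (μ ^ 2 + σ ^ 2) / 2 * ω - 1/2 - Real.log σ - (1/2) * Real.log ω := by
    rw [hI, hvr, hwr]
    have hπ : (0:ℝ) < π := Real.pi_pos
    rw [Real.log_mul (by positivity) (by positivity : (ω⁻¹:ℝ) ≠ 0),
      Real.log_mul (by positivity) (by positivity : (σ^2:ℝ) ≠ 0), Real.log_inv,
      show (σ:ℝ)^2 = σ^2 from rfl, Real.log_pow]
    have hω' : ω ≠ 0 := hω.ne'
    field_simp
    ring
  have hnonneg : 0 ≤ (μ ^ 2 + σ ^ 2) / 2 * ω - 1/2 - Real.log σ - (1/2) * Real.log ω := by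
    have hlog : Real.log (σ ^ 2 * ω) ≤ σ ^ 2 * ω - 1 :=
      Real.log_le_sub_one_of_pos (by positivity)
    rw [Real.log_mul (by positivity) hω.ne', Real.log_pow] at hlog
    push_cast at hlog
    have hμω : 0 ≤ μ ^ 2 * ω := mul_nonneg (sq_nonneg μ) hω.le
    linarith
  rw [gaussKL, klDiv, if_pos ⟨hQP, hllr_int⟩, hval, ENNReal.toReal_ofReal hnonneg]

end gaussKL


lemma exp_tilt_eq {δ x : ℝ} (hx : 0 < x) :
    rexp ((1/2) * Real.log x - δ * x) = x ^ ((1:ℝ)/2) * rexp (-(δ * x)) := by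
  rw [Real.exp_sub, Real.rpow_def_of_pos hx, mul_comm (Real.log x) ((1:ℝ)/2), Real.exp_neg]
  rfl

/-- The exponential tilt of a Gamma distribution by `½ log ω - δ ω` is again Gamma. -/
lemma tilted_gamma {a r δ : ℝ} (ha : 0 < a) (hr : 0 < r) (hδ : 0 ≤ δ) :
    (gammaMeasure a r).tilted (fun ω => (1/2) * Real.log ω - δ * ω)
      = gammaMeasure (a + 1/2) (r + δ) := by
  set f : ℝ → ℝ := fun ω => (1/2) * Real.log ω - δ * ω with hfdef
  have hmf : Measurable f := (Real.measurable_log.const_mul _).sub (measurable_id.const_mul δ)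
  haveI hP0 : IsProbabilityMeasure (gammaMeasure a r) := isProbabilityMeasure_gammaMeasure ha hr
  haveI hP1 : IsProbabilityMeasure (gammaMeasure (a + 1/2) (r + δ)) :=
    isProbabilityMeasure_gammaMeasure (by linarith) (by linarith)
  haveI : NeZero (gammaMeasure a r) := ⟨hP0.ne_zero _⟩
  have hfexp : Integrable (fun x => rexp (f x)) (gammaMeasure a r) :=
    integrable_exp_tilt_gammaMeasure ha hr hδ
  set Z : ℝ := ∫ x, rexp (f x) ∂(gammaMeasure a r) with hZdef
  have hZ : 0 < Z := integral_exp_pos hfexp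
  have hΓ0 : 0 < Real.Gamma a := Real.Gamma_pos_of_pos ha
  have hΓ1 : 0 < Real.Gamma (a + 1/2) := Real.Gamma_pos_of_pos (by linarith)
  set c : ℝ := (r ^ a / Real.Gamma a) / Z * (Real.Gamma (a + 1/2) / (r + δ) ^ (a + 1/2))
    with hcdef
  have hrδ : (0:ℝ) < r + δ := by linarith
  have hc : 0 < c := by
    have h1 : (0:ℝ) < r ^ a := Real.rpow_pos_of_pos hr _
    have h2 : (0:ℝ) < (r + δ) ^ (a + 1/2) := Real.rpow_pos_of_pos hrδ _
    positivity
  have h1 : (gammaMeasure a r).tilted f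
      = volume.withDensity (fun x => gammaPDF a r x * ENNReal.ofReal (rexp (f x) / Z)) := by
    rw [Measure.tilted, ← hZdef, gammaMeasure]
    exact (withDensity_mul volume ((measurable_gammaPDFReal a r).ennreal_ofReal)
      ((hmf.exp.div_const Z).ennreal_ofReal)).symm
  have h2 : (fun x => gammaPDF a r x * ENNReal.ofReal (rexp (f x) / Z))
      =ᵐ[volume] fun x => ENNReal.ofReal c * gammaPDF (a + 1/2) (r + δ) x := by
    filter_upwards [ae_volume_ne_zero] with x hx
    rcases lt_or_gt_of_ne hx with hneg | hpos
    · rw [gammaPDF_of_neg hneg, gammaPDF_of_neg hneg]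
      simp
    · rw [gammaPDF_of_nonneg hpos.le, gammaPDF_of_nonneg hpos.le,
        ← ENNReal.ofReal_mul (by positivity), ← ENNReal.ofReal_mul hc.le]
      congr 1
      have e0 := exp_tilt_eq (δ := δ) hpos
      have e1 : x ^ (a - 1) * x ^ ((1:ℝ)/2) = x ^ (a + 1/2 - 1) := by
        rw [← Real.rpow_add hpos]
        ring_nf
      have e2 : rexp (-(r * x)) * rexp (-(δ * x)) = rexp (-((r + δ) * x)) := by
        rw [← Real.exp_add]
        ring_nf
      have hβ1 : (0:ℝ) < (r + δ) ^ (a + 1/2) := Real.rpow_pos_of_pos hrδ _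
      calc r ^ a / Real.Gamma a * x ^ (a-1) * rexp (-(r * x)) * (rexp (f x) / Z)
          = (r ^ a / Real.Gamma a / Z) * ((x ^ (a-1) * x ^ ((1:ℝ)/2)) *
              (rexp (-(r * x)) * rexp (-(δ * x)))) := by
            rw [e0]; ring
      _ = (r ^ a / Real.Gamma a / Z) * (x ^ (a + 1/2 - 1) * rexp (-((r + δ) * x))) := by
            rw [e1, e2]
      _ = c * ((r + δ) ^ (a + 1/2) / Real.Gamma (a + 1/2) * x ^ (a + 1/2 - 1)
            * rexp (-((r + δ) * x))) := by
            rw [hcdef]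
            field_simp
  have h3 : (gammaMeasure a r).tilted f = ENNReal.ofReal c • gammaMeasure (a + 1/2) (r + δ) := by
    rw [h1, withDensity_congr_ae h2, gammaMeasure]
    exact withDensity_smul _ ((measurable_gammaPDFReal _ _).ennreal_ofReal)
  haveI : IsProbabilityMeasure ((gammaMeasure a r).tilted f) := isProbabilityMeasure_tilted hfexp
  have hmass : ENNReal.ofReal c = 1 := by
    have hu := congrArg (fun m : Measure ℝ => m univ) h3
    simp only [measure_univ, Measure.smul_apply, smul_eq_mul, mul_one] at hu
    exact hu.symm
  rw [h3, hmass, one_smul]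

lemma gamma_ac_gamma {a r δ : ℝ} (ha : 0 < a) (hr : 0 < r) (hδ : 0 ≤ δ) :
    gammaMeasure a r ≪ gammaMeasure (a + 1/2) (r + δ) := by
  set f : ℝ → ℝ := fun ω => (1/2) * Real.log ω - δ * ω with hfdef
  haveI hP0 : IsProbabilityMeasure (gammaMeasure a r) := isProbabilityMeasure_gammaMeasure ha hr
  haveI : NeZero (gammaMeasure a r) := ⟨hP0.ne_zero _⟩
  have hfexp : Integrable (fun x => rexp (f x)) (gammaMeasure a r) :=
    integrable_exp_tilt_gammaMeasure ha hr hδ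
  have hZ : 0 < ∫ x, rexp (f x) ∂(gammaMeasure a r) := integral_exp_pos hfexp
  have hac : gammaMeasure a r ≪ (gammaMeasure a r).tilted f := by
    rw [Measure.tilted]
    refine withDensity_absolutelyContinuous' ?_ ?_
    · exact (((((Real.measurable_log.const_mul _).sub (measurable_id.const_mul δ))).exp.div_const
        _).ennreal_ofReal).aemeasurable
    · refine ae_of_all _ fun x => ?_
      have : 0 < rexp (f x) / ∫ x, rexp (f x) ∂(gammaMeasure a r) := by positivity
      exact (ENNReal.ofReal_pos.mpr this).ne'
  rwa [tilted_gamma ha hr hδ] at hac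


/-- Key representation of the objective. -/
lemma sparseObjective_repr (μ σ : ℝ) (hσ : 0 < σ) (α₀ β₀ : ℝ) (hα : 0 < α₀) (hβ : 0 < β₀)
    (q' : Measure ℝ) [IsProbabilityMeasure q'] (hac' : q' ≪ gammaMeasure α₀ β₀)
    (hllr : Integrable (llr q' (gammaMeasure α₀ β₀)) q')
    (hgauss : Integrable (gaussKL μ σ) q') :
    sparseObjective μ σ α₀ β₀ q'
      = (∫ x, llr q' (gammaMeasure (α₀ + 1/2) (β₀ + (μ ^ 2 + σ ^ 2) / 2)) x ∂q')
        - (1/2 + Real.log σ)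
        - Real.log (∫ x, rexp ((1/2) * Real.log x - (μ ^ 2 + σ ^ 2) / 2 * x)
            ∂(gammaMeasure α₀ β₀))
      ∧ Integrable (llr q' (gammaMeasure (α₀ + 1/2) (β₀ + (μ ^ 2 + σ ^ 2) / 2))) q' := by
  set δ : ℝ := (μ ^ 2 + σ ^ 2) / 2 with hδdef
  have hδ : 0 < δ := by positivity
  set f : ℝ → ℝ := fun ω => (1/2) * Real.log ω - δ * ω with hfdef
  set p₀ : Measure ℝ := gammaMeasure α₀ β₀ with hp₀
  haveI : IsProbabilityMeasure p₀ := isProbabilityMeasure_gammaMeasure hα hβ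
  have hfexp : Integrable (fun x => rexp (f x)) p₀ :=
    integrable_exp_tilt_gammaMeasure hα hβ hδ.le
  have hpos : ∀ᵐ ω ∂q', 0 < ω := hac'.ae_le gammaMeasure_ae_pos
  have hfae : f =ᵐ[q'] fun ω => -(gaussKL μ σ ω) - (1/2 + Real.log σ) := by
    filter_upwards [hpos] with ω hω
    rw [gaussKL_eq hσ hω, hfdef]
    ring
  have hfint : Integrable f q' := by
    rw [integrable_congr hfae]
    exact hgauss.neg.sub (integrable_const _)
  have h_eq := integral_llr_tilted_right hac' hfint hfexp hllr
  have hint_tilt := integrable_llr_tilted_right hac' hfint hllr hfexp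
  rw [tilted_gamma hα hβ hδ.le] at h_eq hint_tilt
  have hfval : ∫ x, f x ∂q' = -(∫ x, gaussKL μ σ x ∂q') - (1/2 + Real.log σ) := by
    rw [integral_congr_ae hfae]
    have hsub : ∫ x, (-(gaussKL μ σ x) - (1/2 + Real.log σ)) ∂q'
        = (∫ x, -(gaussKL μ σ x) ∂q') - ∫ _, (1/2 + Real.log σ) ∂q' :=
      integral_sub hgauss.neg (integrable_const _)
    have hneg : ∫ x, -(gaussKL μ σ x) ∂q' = -∫ x, gaussKL μ σ x ∂q' := integral_neg _
    rw [hsub, hneg, integral_const]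
    simp
  have hkl_eq : (klDiv q' p₀).toReal = ∫ x, llr q' p₀ x ∂q' := by
    rw [klDiv, if_pos ⟨hac', hllr⟩,
      ENNReal.toReal_ofReal (gibbs_llr q' p₀ hac' hllr).1]
  have h_eq' : ∫ x, llr q' (gammaMeasure (α₀ + 1/2) (β₀ + (μ ^ 2 + σ ^ 2) / 2)) x ∂q'
      = (∫ x, llr q' p₀ x ∂q') - (∫ x, f x ∂q')
        + Real.log (∫ x, rexp ((1/2) * Real.log x - (μ ^ 2 + σ ^ 2) / 2 * x) ∂p₀) := h_eq
  refine ⟨?_, hint_tilt⟩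
  rw [sparseObjective, hkl_eq, h_eq', hfval]
  ring

/-- Closed-form variational update for the sparsity-controlling precision `ω` (Eq. 24 of the
paper, shape–rate parameterization): the functional
`Φ(q) = ∫ KL(N(μ,σ²)‖N(0,ω⁻¹)) dq(ω) + KL(q‖Gamma(α₀,β₀))`, over probability measures
`q ≪ Gamma(α₀,β₀)` with finite KL and integrable integrand, is uniquely minimized at
`q* = Gamma(α₀ + 1/2, β₀ + (μ² + σ²)/2)`. -/
theorem gamma_update_sparse (μ σ : ℝ) (hσ : 0 < σ) (α₀ β₀ : ℝ) (hα : 0 < α₀) (hβ : 0 < β₀)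
    (q : Measure ℝ) [IsProbabilityMeasure q] (hac : q ≪ gammaMeasure α₀ β₀)
    (hkl : klDiv q (gammaMeasure α₀ β₀) ≠ ⊤)
    (hint : Integrable (gaussKL μ σ) q) :
    sparseObjective μ σ α₀ β₀ (gammaMeasure (α₀ + 1 / 2) (β₀ + (μ ^ 2 + σ ^ 2) / 2)) ≤
      sparseObjective μ σ α₀ β₀ q ∧
    (sparseObjective μ σ α₀ β₀ q =
        sparseObjective μ σ α₀ β₀ (gammaMeasure (α₀ + 1 / 2) (β₀ + (μ ^ 2 + σ ^ 2) / 2)) ↔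
      q = gammaMeasure (α₀ + 1 / 2) (β₀ + (μ ^ 2 + σ ^ 2) / 2)) := by
  classical
  set δ : ℝ := (μ ^ 2 + σ ^ 2) / 2 with hδdef
  have hδ : 0 < δ := by positivity
  set p₀ : Measure ℝ := gammaMeasure α₀ β₀ with hp₀
  set p₁ : Measure ℝ := gammaMeasure (α₀ + 1/2) (β₀ + δ) with hp₁
  haveI hP0 : IsProbabilityMeasure p₀ := isProbabilityMeasure_gammaMeasure hα hβ
  haveI hP1 : IsProbabilityMeasure p₁ := isProbabilityMeasure_gammaMeasure (by linarith) (by linarith)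
  -- extract integrability of `llr q p₀` from finiteness of the KL
  have hllr_q : Integrable (llr q p₀) q := by
    by_contra h
    apply hkl
    rw [klDiv, if_neg]
    rintro ⟨-, h2⟩
    exact h h2
  -- p₁ data
  have hac₁ : p₁ ≪ p₀ := by
    rw [hp₁, ← tilted_gamma hα hβ hδ.le]
    exact tilted_absolutelyContinuous _ _
  have hfexp : Integrable (fun x => rexp ((1/2) * Real.log x - δ * x)) p₀ :=
    integrable_exp_tilt_gammaMeasure hα hβ hδ.le
  have hllr₁ : Integrable (llr p₁ p₀) p₁ := by
    have h0 : llr p₀ p₀ =ᵐ[p₀] fun _ => 0 := by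
      filter_upwards [Measure.rnDeriv_self p₀] with x hx
      rw [llr, hx]
      simp
    have htilt := llr_tilted_left (Measure.AbsolutelyContinuous.refl p₀) hfexp
      (((Real.measurable_log.const_mul _).sub (measurable_id.const_mul δ)).aemeasurable)
    have hae : llr p₁ p₀ =ᵐ[p₀] fun x => ((1/2) * Real.log x - δ * x)
        - Real.log (∫ x, rexp ((1/2) * Real.log x - δ * x) ∂p₀) := by
      have := htilt
      rw [tilted_gamma hα hβ hδ.le] at this
      filter_upwards [this, h0] with x hx hx0
      rw [← hp₁] at hx
      rw [hx, hx0, add_zero]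
    have hae₁ := hac₁.ae_le hae
    rw [integrable_congr hae₁]
    have hf₁ : Integrable (fun x => (1/2) * Real.log x - δ * x) p₁ := by
      have h1 := (integrable_log_gammaMeasure (a := α₀ + 1/2) (r := β₀ + δ)
        (by linarith) (by linarith)).const_mul (1/2)
      have h2 := (integrable_id_gammaMeasure (a := α₀ + 1/2) (r := β₀ + δ)
        (by linarith) (by linarith)).const_mul δ
      exact h1.sub h2
    exact hf₁.sub (integrable_const _)
  have hgauss₁ : Integrable (gaussKL μ σ) p₁ := by
    have hae : gaussKL μ σ =ᵐ[p₁]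
        fun ω => δ * ω - 1/2 - Real.log σ - (1/2) * Real.log ω := by
      filter_upwards [gammaMeasure_ae_pos (a := α₀ + 1/2) (r := β₀ + δ)] with ω hω
      rw [gaussKL_eq hσ hω, hδdef]
    rw [integrable_congr hae]
    have h1 := (integrable_id_gammaMeasure (a := α₀ + 1/2) (r := β₀ + δ)
      (by linarith) (by linarith)).const_mul δ
    have h2 := (integrable_log_gammaMeasure (a := α₀ + 1/2) (r := β₀ + δ)
      (by linarith) (by linarith)).const_mul (1/2)
    exact ((h1.sub (integrable_const _)).sub (integrable_const _)).sub h2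
  -- apply the representation
  have key_q := sparseObjective_repr μ σ hσ α₀ β₀ hα hβ q hac hllr_q hint
  have key_p1 := sparseObjective_repr μ σ hσ α₀ β₀ hα hβ p₁ hac₁ hllr₁ hgauss₁
  have h0' : llr p₁ p₁ =ᵐ[p₁] fun _ => 0 := by
    filter_upwards [Measure.rnDeriv_self p₁] with x hx
    rw [llr, hx]
    simp
  have h11 : ∫ x, llr p₁ p₁ x ∂p₁ = 0 := by
    rw [integral_congr_ae h0']
    simp
  have hq1 : q ≪ p₁ := hac.trans (gamma_ac_gamma hα hβ hδ.le)
  have gb := gibbs_llr q p₁ hq1 key_q.2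
  have e_q : sparseObjective μ σ α₀ β₀ q
      = (∫ x, llr q p₁ x ∂q) - (1/2 + Real.log σ)
        - Real.log (∫ x, rexp ((1/2) * Real.log x - (μ ^ 2 + σ ^ 2) / 2 * x) ∂p₀) := key_q.1
  have e_p1 : sparseObjective μ σ α₀ β₀ p₁
      = - (1/2 + Real.log σ)
        - Real.log (∫ x, rexp ((1/2) * Real.log x - (μ ^ 2 + σ ^ 2) / 2 * x) ∂p₀) := by
    rw [key_p1.1, h11]
    try ring
  constructor
  · rw [e_q, e_p1]
    linarith [gb.1]
  · constructor
    · intro heq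
      refine gb.2 ?_
      rw [e_q, e_p1] at heq
      linarith
    · intro heq
      rw [heq]
end
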